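/- Let (l_j)_{j≥1} be a nonincreasing sequence of positive real numbers with ∑_{j=1}^∞ l_j < ∞, and let V_L(ε) = ∑_{j : l_j ≥ 2ε} 2ε + ∑_{j : l_j < 2ε} l_j for ε > 0. Let σ = inf{ α ∈ ℝ : ∑_j l_j^α < ∞ }. Then for every complex number s with Re(s) > σ, ∑_{j=1}^∞ l_j^s = s · (∑_{j=1}^∞ l_j) · l_1^{s−1} + 2s(1−s) · ∫_0^{l_1/2} V_L(ε) (2ε)^{s−2} dε, where the integral converges absolutely. -/

import Mathlib

open MeasureTheory

private lemma min_le_rpow_mul' {x y γ : ℝ} (hx : 0 < x) (hy : 0 < y) (hγ0 : 0 ≤ γ)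
    (hγ1 : γ ≤ 1) : min x y ≤ x ^ (1 - γ) * y ^ γ := by
  have h0 : (0:ℝ) < min x y := lt_min hx hy
  calc min x y = min x y ^ ((1 - γ) + γ) := by rw [sub_add_cancel, Real.rpow_one]
    _ = min x y ^ (1 - γ) * min x y ^ γ := Real.rpow_add h0 _ _
    _ ≤ x ^ (1 - γ) * y ^ γ :=
      mul_le_mul (Real.rpow_le_rpow h0.le (min_le_left _ _) (by linarith))
        (Real.rpow_le_rpow h0.le (min_le_right _ _) hγ0)
        (Real.rpow_nonneg h0.le _) (Real.rpow_nonneg hx.le _)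

set_option maxHeartbeats 1000000 in
/-- For a real fractal string with lengths `(l_j)` (nonincreasing, summable),
inner tube volume `V_L(ε) = ∑_{l_j ≥ 2ε} 2ε + ∑_{l_j < 2ε} l_j`, and abscissa of convergence
`σ`, one has, for every complex `s` with `Re(s) > σ`:
`∑_j l_j^s = s (∑_j l_j) l_1^{s-1} + 2s(1-s) ∫_0^{l_1/2} V_L(ε) (2ε)^{s-2} dε`,
the integral converging absolutely. -/
theorem real_string_zeta_eq_tube_integral (l : ℕ → ℝ) (hpos : ∀ j, 0 < l j)
    (hmono : Antitone l) (hsum : Summable l)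
    (V : ℝ → ℝ)
    (hV : ∀ ε : ℝ, 0 < ε →
      V ε = 2 * ε * (Nat.card {j : ℕ | 2 * ε ≤ l j} : ℝ)
        + ∑' j : {j : ℕ // l j < 2 * ε}, l j.1)
    (σ : ℝ) (hσ : σ = sInf {α : ℝ | Summable fun j => l j ^ α})
    (s : ℂ) (hs : σ < s.re) :
    IntegrableOn (fun ε : ℝ => (V ε : ℂ) * (2 * (ε : ℂ)) ^ (s - 2))
        (Set.Ioc 0 (l 0 / 2)) volume
      ∧ ∑' j, (l j : ℂ) ^ s
          = s * ((∑' j, l j : ℝ) : ℂ) * (l 0 : ℂ) ^ (s - 1)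
            + 2 * s * (1 - s)
              * ∫ ε in Set.Ioc 0 (l 0 / 2), (V ε : ℂ) * (2 * (ε : ℂ)) ^ (s - 2) := by
  have hcast2 : (fun ε : ℝ => (V ε : ℂ) * (2 * (ε : ℂ)) ^ (s - 2))
      = fun ε : ℝ => (V ε : ℂ) * (((2 * ε : ℝ) : ℂ)) ^ (s - 2) := by
    funext ε
    norm_num [Complex.ofReal_mul]
  rw [hcast2]
  have hL : 0 < l 0 := hpos 0
  set c : ℝ := l 0 / 2 with hcdef
  have hc0 : (0:ℝ) ≤ c := by positivity
  have hl0 : Filter.Tendsto l Filter.atTop (nhds 0) := hsum.tendsto_atTop_zero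
  -- choose an exponent γ
  obtain ⟨β, hβmem, hβlt⟩ :
      ∃ β ∈ {α : ℝ | Summable fun j => l j ^ α}, β < s.re := by
    refine exists_lt_of_csInf_lt ⟨1, ?_⟩ (hσ ▸ hs)
    simpa [Real.rpow_one] using hsum
  have hβsum : Summable fun j => l j ^ β := hβmem
  have hβpos : 0 < β := by
    by_contra hβ
    push_neg at hβ
    have h1 : ∀ᶠ j in Filter.atTop, l j < 1 := hl0.eventually_lt_const one_pos
    have h3 : ∀ᶠ j in Filter.atTop, (1:ℝ) ≤ l j ^ β := by
      filter_upwards [h1] with j hj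
      calc (1:ℝ) = l j ^ (0:ℝ) := (Real.rpow_zero _).symm
        _ ≤ l j ^ β := Real.rpow_le_rpow_of_exponent_ge (hpos j) hj.le hβ
    have h4 : ∀ᶠ j in Filter.atTop, l j ^ β < 1 :=
      hβsum.tendsto_atTop_zero.eventually_lt_const one_pos
    obtain ⟨j, hj1, hj2⟩ := (h3.and h4).exists
    linarith
  set γ : ℝ := min β 1 with hγdef
  have hγpos : 0 < γ := lt_min hβpos one_pos
  have hγ1 : γ ≤ 1 := min_le_right _ _
  have hγlt : γ < s.re := lt_of_le_of_lt (min_le_left _ _) hβlt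
  have hγsum : Summable fun j => l j ^ γ := by
    rcases le_total β 1 with h | h
    · simpa [hγdef, min_eq_left h] using hβsum
    · simpa [hγdef, min_eq_right h, Real.rpow_one] using hsum
  have hσ'pos : 0 < s.re := hγpos.trans hγlt
  have hs0 : s ≠ 0 := by
    intro h
    rw [h] at hσ'pos
    simp at hσ'pos
  have hsumα : ∀ α : ℝ, γ ≤ α → Summable fun j => l j ^ α := by
    intro α hα
    obtain ⟨N, hN⟩ := Filter.eventually_atTop.mp (hl0.eventually_lt_const one_pos)
    rw [← summable_nat_add_iff N]
    refine Summable.of_nonneg_of_le (fun n => Real.rpow_nonneg (hpos _).le _)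
      (fun n => Real.rpow_le_rpow_of_exponent_ge (hpos _) (hN _ (Nat.le_add_left _ _)).le hα)
      ((summable_nat_add_iff N).mpr hγsum)
  have hsumσ' : Summable fun j => l j ^ s.re := hsumα _ hγlt.le
  -- summability of the min function
  have hminnonneg : ∀ (ε : ℝ), 0 < ε → ∀ j, 0 ≤ min (2*ε) (l j) := by
    intro ε hε j
    exact le_min (by positivity) (hpos j).le
  have hminsum : ∀ ε : ℝ, 0 < ε → Summable fun j => min (2*ε) (l j) := by
    intro ε hε
    exact Summable.of_nonneg_of_le (hminnonneg ε hε) (fun j => min_le_right _ _) hsum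
  -- V equals a tsum of mins
  have hVeq : ∀ ε : ℝ, 0 < ε → V ε = ∑' j, min (2*ε) (l j) := by
    intro ε hε
    have hsummin := hminsum ε hε
    have h1 : (∑' j : {j : ℕ | 2*ε ≤ l j}, min (2*ε) (l (j:ℕ)))
        = 2*ε * (Nat.card {j : ℕ | 2*ε ≤ l j} : ℝ) := by
      have he : ∀ j : {j : ℕ | 2*ε ≤ l j}, min (2*ε) (l (j:ℕ)) = 2*ε := fun j => min_eq_left j.2
      rw [tsum_congr he, tsum_const, nsmul_eq_mul, mul_comm]
    have hset : ({j : ℕ | 2*ε ≤ l j}ᶜ : Set ℕ) = {j : ℕ | l j < 2*ε} := by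
      ext j
      simp [Set.mem_setOf_eq, not_le]
    have h2 : (∑' j : ↥({j : ℕ | 2*ε ≤ l j}ᶜ), min (2*ε) (l (j:ℕ)))
        = ∑' j : {j : ℕ // l j < 2*ε}, l (j:ℕ) := by
      rw [hset]
      exact tsum_congr fun j => min_eq_right (le_of_lt j.2)
    rw [hV ε hε,
      ← Summable.tsum_add_tsum_compl (s := {j : ℕ | 2*ε ≤ l j})
        (hsummin.subtype _) (hsummin.subtype _), h1, h2]
  -- the summand functions
  set F : ℕ → ℝ → ℂ := fun j ε => ((min (2*ε) (l j) : ℝ) : ℂ) * ((2*ε : ℝ) : ℂ) ^ (s-2)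
    with hFdef
  have hnorm : ∀ ε : ℝ, 0 < ε → ‖(((2*ε : ℝ)) : ℂ) ^ (s-2)‖ = (2*ε) ^ (s.re - 2) := by
    intro ε hε
    rw [Complex.norm_cpow_eq_rpow_re_of_pos (by positivity)]
    norm_num [Complex.sub_re]
  have hFnorm : ∀ j, ∀ ε : ℝ, 0 < ε →
      ‖F j ε‖ = min (2*ε) (l j) * (2*ε) ^ (s.re - 2) := by
    intro j ε hε
    rw [hFdef]
    rw [norm_mul, hnorm ε hε, Complex.norm_real,
      Real.norm_of_nonneg (hminnonneg ε hε j)]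
  have hFsummableNorm : ∀ ε : ℝ, 0 < ε → Summable fun j => ‖F j ε‖ := by
    intro ε hε
    have : (fun j => ‖F j ε‖) = fun j => min (2*ε) (l j) * (2*ε) ^ (s.re - 2) := by
      funext j; exact hFnorm j ε hε
    rw [this]
    exact (hminsum ε hε).mul_right _
  have hFsummable : ∀ ε : ℝ, 0 < ε → Summable fun j => F j ε :=
    fun ε hε => (hFsummableNorm ε hε).of_norm
  -- measurability
  have hmeasIoc : MeasurableSet (Set.Ioc (0:ℝ) c) := measurableSet_Ioc
  have hFcont : ∀ j, ContinuousOn (F j) (Set.Ioi 0) := by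
    intro j
    apply ContinuousOn.mul
    · exact (Complex.continuous_ofReal.comp
        ((continuous_const.mul continuous_id).min continuous_const)).continuousOn
    · intro ε hε
      have h2 : ContinuousAt (fun ε : ℝ => ((2*ε : ℝ) : ℂ) ^ (s-2)) ε := by
        have hmem : (0:ℝ) < ε := hε
        exact (Complex.continuousAt_ofReal_cpow_const _ _ (Or.inr (by positivity))).comp
          ((continuous_const.mul continuous_id).continuousAt)
      exact h2.continuousWithinAt
  have hFaesm : ∀ j, AEStronglyMeasurable (F j) (volume.restrict (Set.Ioc 0 c)) := fun j =>
    ((hFcont j).mono Set.Ioc_subset_Ioi_self).aestronglyMeasurable hmeasIoc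
  have hGaesm : AEStronglyMeasurable (fun ε => ∑' j, F j ε)
      (volume.restrict (Set.Ioc 0 c)) := by
    refine aestronglyMeasurable_of_tendsto_ae Filter.atTop
      (fun n => ?_) ?_ (f := fun n ε => ∑ j ∈ Finset.range n, F j ε)
    · exact Finset.aestronglyMeasurable_fun_sum _ fun j _ => hFaesm j
    · filter_upwards [ae_restrict_mem hmeasIoc] with ε hε
      exact (hFsummable ε hε.1).hasSum.tendsto_sum_nat
  -- integrable comparison functions
  have hrpow_int : ∀ r : ℝ, -1 < r →
      IntegrableOn (fun ε : ℝ => (2*ε) ^ r) (Set.Ioc 0 c) volume := by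
    intro r hr
    have h := (intervalIntegral.intervalIntegrable_rpow' hr
      (a := 0) (b := 2*c)).comp_mul_left (c := 2)
    have h2 : IntervalIntegrable (fun x : ℝ => (2*x) ^ r) volume 0 c := by
      norm_num at h
      exact h
    simpa [intervalIntegrable_iff, Set.uIoc_of_le hc0] using h2
  have hFint : ∀ j, IntegrableOn (F j) (Set.Ioc 0 c) volume := by
    intro j
    refine Integrable.mono' (hrpow_int (s.re - 1) (by linarith)) (hFaesm j) ?_
    filter_upwards [ae_restrict_mem hmeasIoc] with ε hε
    rw [hFnorm j ε hε.1]
    have h2ε : (0:ℝ) < 2*ε := by linarith [hε.1]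
    calc min (2*ε) (l j) * (2*ε) ^ (s.re - 2)
        ≤ (2*ε) * (2*ε) ^ (s.re - 2) :=
          mul_le_mul_of_nonneg_right (min_le_left _ _) (Real.rpow_nonneg h2ε.le _)
      _ = (2*ε) ^ (s.re - 1) := by
          rw [show s.re - 1 = 1 + (s.re - 2) by ring, Real.rpow_add h2ε, Real.rpow_one]
  -- per-term bound for the integrals of norms
  have hptbound : ∀ j, ∀ ε ∈ Set.Ioc (0:ℝ) c,
      ‖F j ε‖ ≤ l j ^ γ * (2*ε) ^ (s.re - 1 - γ) := by
    intro j ε hε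
    have hε0 := hε.1
    have h2ε : (0:ℝ) < 2*ε := by linarith
    rw [hFnorm j ε hε0]
    calc min (2*ε) (l j) * (2*ε) ^ (s.re - 2)
        ≤ ((2*ε) ^ (1-γ) * l j ^ γ) * (2*ε) ^ (s.re - 2) :=
          mul_le_mul_of_nonneg_right
            (min_le_rpow_mul' h2ε (hpos j) hγpos.le hγ1) (Real.rpow_nonneg h2ε.le _)
      _ = l j ^ γ * ((2*ε) ^ (1-γ) * (2*ε) ^ (s.re - 2)) := by ring
      _ = l j ^ γ * (2*ε) ^ (s.re - 1 - γ) := by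
          rw [← Real.rpow_add h2ε, show (1-γ) + (s.re - 2) = s.re - 1 - γ by ring]
  have hbound_int : IntegrableOn (fun ε : ℝ => (2*ε) ^ (s.re - 1 - γ))
      (Set.Ioc 0 c) volume := hrpow_int _ (by linarith)
  have hFnormint_le : ∀ j, (∫ ε in Set.Ioc 0 c, ‖F j ε‖)
      ≤ l j ^ γ * ∫ ε in Set.Ioc 0 c, (2*ε) ^ (s.re - 1 - γ) := by
    intro j
    rw [← integral_const_mul]
    exact setIntegral_mono_on ((hFint j).norm) (hbound_int.const_mul _) hmeasIoc
      (hptbound j)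
  have hFintNorm : Summable fun j => ∫ ε in Set.Ioc 0 c, ‖F j ε‖ :=
    Summable.of_nonneg_of_le (fun j => integral_nonneg fun ε => norm_nonneg _)
      hFnormint_le (hγsum.mul_right _)
  -- the target function equals the tsum of F on Ioc 0 c
  have hVG : Set.EqOn (fun ε : ℝ => (V ε : ℂ) * ((2*ε : ℝ) : ℂ) ^ (s-2))
      (fun ε => ∑' j, F j ε) (Set.Ioc 0 c) := by
    intro ε hε
    simp only
    rw [hVeq ε hε.1, Complex.ofReal_tsum, ← tsum_mul_right]
  -- global bound and integrability of tsum
  set C : ℝ := ∑' j, l j ^ γ with hCdef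
  have hGnorm_le : ∀ ε ∈ Set.Ioc (0:ℝ) c,
      ‖∑' j, F j ε‖ ≤ C * (2*ε) ^ (s.re - 1 - γ) := by
    intro ε hε
    have hε0 := hε.1
    calc ‖∑' j, F j ε‖ ≤ ∑' j, ‖F j ε‖ := norm_tsum_le_tsum_norm (hFsummableNorm ε hε0)
      _ ≤ ∑' j, l j ^ γ * (2*ε) ^ (s.re - 1 - γ) :=
          Summable.tsum_le_tsum (fun j => hptbound j ε hε) (hFsummableNorm ε hε0)
            (hγsum.mul_right _)
      _ = C * (2*ε) ^ (s.re - 1 - γ) := tsum_mul_right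
  have hGint : IntegrableOn (fun ε => ∑' j, F j ε) (Set.Ioc 0 c) volume := by
    refine Integrable.mono' (hbound_int.const_mul C) hGaesm ?_
    filter_upwards [ae_restrict_mem hmeasIoc] with ε hε
    exact hGnorm_le ε hε
  have hTargetInt : IntegrableOn (fun ε : ℝ => (V ε : ℂ) * ((2*ε : ℝ) : ℂ) ^ (s-2))
      (Set.Ioc 0 c) volume :=
    hGint.congr_fun (fun ε hε => (hVG hε).symm) hmeasIoc
  -- value of the integral as a sum
  have hIntEq : (∫ ε in Set.Ioc 0 c, (V ε : ℂ) * ((2*ε : ℝ) : ℂ) ^ (s-2))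
      = ∑' j, ∫ ε in Set.Ioc 0 c, F j ε := by
    rw [setIntegral_congr_fun hmeasIoc hVG]
    exact (integral_tsum_of_summable_integral_norm hFint hFintNorm).symm
  refine ⟨hTargetInt, ?_⟩
  -- summability of the complex series
  have hZsum : Summable fun j => (l j : ℂ) ^ s := by
    apply Summable.of_norm
    have he : (fun j => ‖(l j : ℂ) ^ s‖) = fun j => l j ^ s.re := by
      funext j
      rw [Complex.norm_cpow_eq_rpow_re_of_pos (hpos j)]
    rw [he]
    exact hsumσ'
  have hTsum : Summable fun j => ((l j : ℝ) : ℂ) := Complex.summable_ofReal.mpr hsum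
  by_cases hs1 : s = 1
  · subst hs1
    simp only [Complex.cpow_one, sub_self, Complex.cpow_zero, mul_one, one_mul,
      sub_self, mul_zero, zero_mul, add_zero]
    rw [← Complex.ofReal_tsum]
  -- main case s ≠ 1
  have hs1' : s - 1 ≠ 0 := sub_ne_zero.mpr hs1
  have hIj : ∀ j, (∫ ε in Set.Ioc 0 c, F j ε)
      = (1/(2*s) - 1/(2*(s-1))) * (l j : ℂ) ^ s
        + ((l 0 : ℂ) ^ (s-1) / (2*(s-1))) * ((l j : ℝ) : ℂ) := by
    intro j
    have hlj : (0:ℝ) < l j := hpos j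
    have hljle : l j ≤ l 0 := hmono (Nat.zero_le j)
    have ha : (0:ℝ) ≤ l j / 2 := by linarith
    have hac : l j / 2 ≤ c := by rw [hcdef]; linarith
    have hljC : (l j : ℂ) ≠ 0 := Complex.ofReal_ne_zero.mpr hlj.ne'
    have hii : IntervalIntegrable (F j) volume 0 c := by
      rw [intervalIntegrable_iff, Set.uIoc_of_le hc0]
      exact hFint j
    have hii1 : IntervalIntegrable (F j) volume 0 (l j / 2) :=
      hii.mono_set (by
        rw [Set.uIcc_of_le ha, Set.uIcc_of_le hc0]
        exact Set.Icc_subset_Icc_right hac)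
    have hii2 : IntervalIntegrable (F j) volume (l j / 2) c :=
      hii.mono_set (by
        rw [Set.uIcc_of_le hac, Set.uIcc_of_le hc0]
        exact Set.Icc_subset_Icc_left ha)
    have hp1 : (∫ ε in (0:ℝ)..(l j / 2), F j ε) = (l j : ℂ) ^ s / (2*s) := by
      have he : Set.EqOn (F j) (fun ε : ℝ => ((2*ε : ℝ) : ℂ) ^ (s-1))
          (Set.uIcc 0 (l j / 2)) := by
        intro ε hε
        rw [Set.uIcc_of_le ha] at hε
        rcases eq_or_lt_of_le hε.1 with h0 | h0
        · have hm : min (2*(0:ℝ)) (l j) = 0 := by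
            rw [mul_zero]
            exact min_eq_left (hpos j).le
          simp [hFdef, ← h0, hm, Complex.zero_cpow hs1']
          exact Or.inl (hpos j).le
        · have hmin : min (2*ε) (l j) = 2*ε := min_eq_left (by linarith [hε.2])
          simp only [hFdef, hmin]
          rw [show s - 1 = 1 + (s - 2) by ring,
            Complex.cpow_add _ _ (Complex.ofReal_ne_zero.mpr (by positivity)),
            Complex.cpow_one]
      rw [intervalIntegral.integral_congr he]
      have hsub := intervalIntegral.integral_comp_mul_left
        (a := (0:ℝ)) (b := l j / 2) (fun u : ℝ => ((u : ℝ) : ℂ) ^ (s-1)) two_ne_zero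
      rw [hsub, show (2:ℝ) * 0 = 0 by ring, show (2:ℝ) * (l j / 2) = l j by ring]
      rw [integral_cpow (Or.inl (by simp only [Complex.sub_re, Complex.one_re]; linarith))]
      rw [show s - 1 + 1 = s by ring, Complex.ofReal_zero, Complex.zero_cpow hs0,
        Complex.real_smul]
      push_cast
      field_simp
      rw [sub_zero]
    have hp2 : (∫ ε in (l j / 2)..c, F j ε)
        = (l j : ℂ) * ((l 0 : ℂ) ^ (s-1) - (l j : ℂ) ^ (s-1)) / (2*(s-1)) := by
      have he : Set.EqOn (F j) (fun ε : ℝ => (l j : ℂ) * ((2*ε : ℝ) : ℂ) ^ (s-2))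
          (Set.uIcc (l j / 2) c) := by
        intro ε hε
        rw [Set.uIcc_of_le hac] at hε
        have hmin : min (2*ε) (l j) = l j := min_eq_right (by linarith [hε.1])
        simp only [hFdef, hmin]
      rw [intervalIntegral.integral_congr he, intervalIntegral.integral_const_mul]
      have hsub := intervalIntegral.integral_comp_mul_left
        (a := l j / 2) (b := c) (fun u : ℝ => ((u : ℝ) : ℂ) ^ (s-2)) two_ne_zero
      rw [hsub, show (2:ℝ) * (l j / 2) = l j by ring,
        show (2:ℝ) * c = l 0 by rw [hcdef]; ring]
      have hne : s - 2 ≠ -1 := by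
        intro h
        exact hs1 (by linear_combination h)
      have hnm : (0:ℝ) ∉ Set.uIcc (l j) (l 0) := by
        rw [Set.uIcc_of_le hljle]
        exact fun h => absurd h.1 (not_le.mpr hlj)
      rw [integral_cpow (Or.inr ⟨hne, hnm⟩), show s - 2 + 1 = s - 1 by ring,
        Complex.real_smul]
      push_cast
      field_simp
    rw [← intervalIntegral.integral_of_le hc0,
      ← intervalIntegral.integral_add_adjacent_intervals hii1 hii2, hp1, hp2]
    have hpow : (l j : ℂ) ^ s = (l j : ℂ) * (l j : ℂ) ^ (s-1) := by
      conv_lhs => rw [show s = 1 + (s-1) by ring]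
      rw [Complex.cpow_add _ _ hljC, Complex.cpow_one]
    rw [hpow]
    field_simp
    ring
  have hsumIntegrals : (∑' j, ∫ ε in Set.Ioc 0 c, F j ε)
      = (1/(2*s) - 1/(2*(s-1))) * (∑' j, (l j : ℂ) ^ s)
        + ((l 0 : ℂ) ^ (s-1) / (2*(s-1))) * (((∑' j, l j : ℝ)) : ℂ) := by
    rw [tsum_congr hIj, Summable.tsum_add (hZsum.mul_left _) (hTsum.mul_left _),
      tsum_mul_left, tsum_mul_left, Complex.ofReal_tsum]
  rw [hIntEq, hsumIntegrals]
  field_simp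
  ring
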